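/- Let n(x) = (s-2)(s-3)x^s - 2s(s-3)x^{s-1} + s(s-1)x^{s-2} - 2sx + 2(s-3) for an integer s ≥ 4. Then n(x) ≥ 0 for all x ≥ 0, with equality only at x = 1. -/
import Mathlib


def nPoly (s : ℕ) (x : ℝ) : ℝ :=
  ((s : ℝ) - 2) * ((s : ℝ) - 3) * x ^ s - 2 * (s : ℝ) * ((s : ℝ) - 3) * x ^ (s - 1)
    + (s : ℝ) * ((s : ℝ) - 1) * x ^ (s - 2) - 2 * (s : ℝ) * x + 2 * ((s : ℝ) - 3)

def tPoly (N : ℕ) (x : ℝ) : ℝ :=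
  ∑ k ∈ Finset.range N, ((k : ℝ) + 1) * ((k : ℝ) + 2) * x ^ k

def mPoly (s : ℕ) (x : ℝ) : ℝ :=
  ∑ k ∈ Finset.range (s - 3), ((k : ℝ) + 1) * ((k : ℝ) + 2) * ((s : ℝ) - 3 - (k : ℝ)) * x ^ k

lemma tPoly_closed (N : ℕ) (x : ℝ) :
    (x - 1) ^ 4 * tPoly N x =
      2 - 2 * x - ((N : ℝ) + 1) * ((N : ℝ) + 2) * x ^ N
        + (3 * (N : ℝ) + 1) * ((N : ℝ) + 2) * x ^ (N + 1)
        - (N : ℝ) * (3 * (N : ℝ) + 5) * x ^ (N + 2)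
        + (N : ℝ) * ((N : ℝ) + 1) * x ^ (N + 3) := by
  induction N with
  | zero => simp [tPoly]
  | succ n ih =>
    rw [tPoly, Finset.sum_range_succ, ← tPoly, mul_add, ih]
    push_cast
    ring

lemma mPoly_succ (t : ℕ) (x : ℝ) :
    mPoly (t + 5) x = mPoly (t + 4) x + tPoly (t + 2) x := by
  rw [mPoly, mPoly, tPoly, show t + 5 - 3 = t + 1 + 1 from rfl,
    show t + 4 - 3 = t + 1 from rfl, show t + 2 = t + 1 + 1 from rfl,
    Finset.sum_range_succ _ (t + 1), Finset.sum_range_succ _ (t + 1)]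
  have hsum : ∑ k ∈ Finset.range (t + 1),
      ((k : ℝ) + 1) * ((k : ℝ) + 2) * (((t : ℝ) + 5) - 3 - (k : ℝ)) * x ^ k =
      ∑ k ∈ Finset.range (t + 1),
      (((k : ℝ) + 1) * ((k : ℝ) + 2) * (((t : ℝ) + 4) - 3 - (k : ℝ)) * x ^ k
        + ((k : ℝ) + 1) * ((k : ℝ) + 2) * x ^ k) :=
    Finset.sum_congr rfl fun k _ => by ring
  push_cast
  rw [hsum, Finset.sum_add_distrib]
  ring

lemma nPoly_factor (t : ℕ) (x : ℝ) :
    nPoly (t + 4) x = (x - 1) ^ 4 * mPoly (t + 4) x := by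
  induction t with
  | zero =>
    simp only [nPoly, mPoly, show (0:ℕ) + 4 - 3 = 1 from rfl, Finset.sum_range_one]
    norm_num
    ring
  | succ n ih =>
    rw [show n + 1 + 4 = n + 5 from rfl, mPoly_succ, mul_add, ← ih, tPoly_closed]
    simp only [nPoly, show n + 5 - 1 = n + 4 from rfl, show n + 5 - 2 = n + 3 from rfl,
      show n + 4 - 1 = n + 3 from rfl, show n + 4 - 2 = n + 2 from rfl]
    push_cast
    ring

lemma mPoly_pos (t : ℕ) (x : ℝ) (hx : 0 ≤ x) : 0 < mPoly (t + 4) x := by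
  rw [mPoly, show t + 4 - 3 = t + 1 from rfl]
  apply Finset.sum_pos'
  · intro k hk
    have hk' : k ≤ t := Nat.lt_succ_iff.mp (Finset.mem_range.mp hk)
    have h1 : (0:ℝ) ≤ (k : ℝ) + 1 := by positivity
    have h2 : (0:ℝ) ≤ (k : ℝ) + 2 := by positivity
    have h3 : (0:ℝ) ≤ ((t : ℝ) + 4) - 3 - (k : ℝ) := by
      have : (k : ℝ) ≤ (t : ℝ) := by exact_mod_cast hk'
      linarith
    have h4 : (0:ℝ) ≤ x ^ k := pow_nonneg hx k
    push_cast
    positivity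
  · refine ⟨0, Finset.mem_range.mpr (Nat.succ_pos t), ?_⟩
    have ht : (0:ℝ) ≤ (t:ℝ) := Nat.cast_nonneg t
    push_cast
    norm_num
    linarith

theorem nPoly_nonneg (s : ℕ) (hs : 4 ≤ s) :
    ∀ x : ℝ, 0 ≤ x → 0 ≤ nPoly s x ∧ (nPoly s x = 0 → x = 1) := by
  obtain ⟨t, rfl⟩ : ∃ t, s = t + 4 := ⟨s - 4, by omega⟩
  intro x hx
  rw [nPoly_factor]
  have hm := mPoly_pos t x hx
  have h4 : (0:ℝ) ≤ (x - 1) ^ 4 := by positivity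
  constructor
  · positivity
  · intro h
    have : (x - 1) ^ 4 = 0 := by
      rcases mul_eq_zero.mp h with h' | h'
      · exact h'
      · exact absurd h' (ne_of_gt hm)
    have : x - 1 = 0 := by
      exact pow_eq_zero_iff (by norm_num) |>.mp this
    linarith
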